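/- Let θ ↦ P_θ be a C¹-smooth family of m×m stochastic matrices satisfying the uniform Doeblin condition P_θ^{n₀}(i,j) ≥ κ ν₀(j), with unique invariant probability μ_θ. Then θ ↦ μ_θ is differentiable and ∂_{θ_l} μ_θ = Σ_{k=0}^∞ (μ_θ · ∂_{θ_l}P_θ) · P_θ^k, where the series converges geometrically: ‖(μ_θ ∂_{θ_l}P_θ) P_θ^k‖_tv ≤ (1/2) max_i Σ_j |∂_{θ_l}p_{ij}(θ)| (1−κ)^{⌊k/n₀⌋}. -/

import Mathlib

open Finset

attribute [local instance] Matrix.linftyOpNormedAddCommGroup Matrix.linftyOpNormedSpace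
  Matrix.linftyOpNormedRing Matrix.linftyOpNormedAlgebra

lemma stoch_pow {m : ℕ} (Q : Matrix (Fin m) (Fin m) ℝ)
    (h0 : ∀ i j, 0 ≤ Q i j) (h1 : ∀ i, ∑ j, Q i j = 1) (n : ℕ) :
    (∀ i j, 0 ≤ (Q ^ n) i j) ∧ (∀ i, ∑ j, (Q ^ n) i j = 1) := by
  induction n with
  | zero =>
    constructor
    · intro i j; rw [pow_zero]; rcases eq_or_ne i j with h | h <;>
        simp [Matrix.one_apply, h]
    · intro i; rw [pow_zero]; simp [Matrix.one_apply]
  | succ n ih =>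
    rw [pow_succ]
    constructor
    · intro i j
      rw [Matrix.mul_apply]
      exact Finset.sum_nonneg fun k _ => mul_nonneg (ih.1 i k) (h0 k j)
    · intro i
      simp only [Matrix.mul_apply]
      rw [Finset.sum_comm]
      calc ∑ k, ∑ j, (Q ^ n) i k * Q k j = ∑ k, (Q ^ n) i k * ∑ j, Q k j := by
            simp [Finset.mul_sum]
        _ = 1 := by simp only [h1, mul_one]; exact ih.2 i

lemma sum_vecMul_stoch {m : ℕ} (Q : Matrix (Fin m) (Fin m) ℝ)
    (h1 : ∀ i, ∑ j, Q i j = 1) (x : Fin m → ℝ) :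
    ∑ j, Matrix.vecMul x Q j = ∑ i, x i := by
  simp only [Matrix.vecMul, dotProduct]
  rw [Finset.sum_comm]
  calc ∑ i, ∑ j, x i * Q i j = ∑ i, x i * ∑ j, Q i j := by simp [Finset.mul_sum]
    _ = ∑ i, x i := by simp [h1]

lemma abs_vecMul_le {m : ℕ} (Q : Matrix (Fin m) (Fin m) ℝ)
    (h0 : ∀ i j, 0 ≤ Q i j) (h1 : ∀ i, ∑ j, Q i j = 1) (x : Fin m → ℝ) :
    ∑ j, |Matrix.vecMul x Q j| ≤ ∑ i, |x i| := by
  simp only [Matrix.vecMul, dotProduct]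
  calc ∑ j, |∑ i, x i * Q i j| ≤ ∑ j, ∑ i, |x i| * Q i j := by
        refine Finset.sum_le_sum fun j _ => (Finset.abs_sum_le_sum_abs _ _).trans ?_
        refine Finset.sum_le_sum fun i _ => ?_
        rw [abs_mul, abs_of_nonneg (h0 i j)]
    _ = ∑ i, |x i| := by
        rw [Finset.sum_comm]
        calc ∑ i, ∑ j, |x i| * Q i j = ∑ i, |x i| * ∑ j, Q i j := by simp [Finset.mul_sum]
          _ = _ := by simp [h1]

lemma doeblin_contract {m : ℕ} (Q : Matrix (Fin m) (Fin m) ℝ)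
    (h1 : ∀ i, ∑ j, Q i j = 1) (κ : ℝ) (ν₀ : Fin m → ℝ)
    (hν₀1 : ∑ j, ν₀ j = 1) (hD : ∀ i j, κ * ν₀ j ≤ Q i j)
    (x : Fin m → ℝ) (hx : ∑ i, x i = 0) :
    ∑ j, |Matrix.vecMul x Q j| ≤ (1 - κ) * ∑ i, |x i| := by
  simp only [Matrix.vecMul, dotProduct]
  have key : ∀ j, ∑ i, x i * Q i j = ∑ i, x i * (Q i j - κ * ν₀ j) := by
    intro j
    simp only [mul_sub, Finset.sum_sub_distrib]
    rw [← Finset.sum_mul, hx, zero_mul, sub_zero]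
  calc ∑ j, |∑ i, x i * Q i j| ≤ ∑ j, ∑ i, |x i| * (Q i j - κ * ν₀ j) := by
        refine Finset.sum_le_sum fun j _ => ?_
        rw [key j]
        refine (Finset.abs_sum_le_sum_abs _ _).trans (Finset.sum_le_sum fun i _ => ?_)
        rw [abs_mul, abs_of_nonneg (sub_nonneg.2 (hD i j))]
    _ = (1 - κ) * ∑ i, |x i| := by
        rw [Finset.sum_comm]
        calc ∑ i, ∑ j, |x i| * (Q i j - κ * ν₀ j)
            = ∑ i, |x i| * (1 - κ) := by
              refine Finset.sum_congr rfl fun i _ => ?_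
              rw [← Finset.mul_sum]
              congr 1
              rw [Finset.sum_sub_distrib, h1, ← Finset.mul_sum, hν₀1, mul_one]
          _ = (1 - κ) * ∑ i, |x i| := by rw [← Finset.sum_mul, mul_comm]

lemma doeblin_contract_pow {m : ℕ} (Q : Matrix (Fin m) (Fin m) ℝ)
    (h0 : ∀ i j, 0 ≤ Q i j) (h1 : ∀ i, ∑ j, Q i j = 1)
    (n₀ : ℕ) (hn₀ : 0 < n₀) (κ : ℝ) (hκ1 : κ ≤ 1) (ν₀ : Fin m → ℝ)
    (hν₀1 : ∑ j, ν₀ j = 1) (hD : ∀ i j, κ * ν₀ j ≤ (Q ^ n₀) i j)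
    (x : Fin m → ℝ) (hx : ∑ i, x i = 0) (k : ℕ) :
    ∑ j, |Matrix.vecMul x (Q ^ k) j| ≤ (1 - κ) ^ (k / n₀) * ∑ i, |x i| := by
  induction k using Nat.strong_induction_on generalizing x with
  | _ k ih =>
  rcases lt_or_ge k n₀ with hk | hk
  · rw [Nat.div_eq_of_lt hk, pow_zero, one_mul]
    exact abs_vecMul_le _ (stoch_pow Q h0 h1 k).1 (stoch_pow Q h0 h1 k).2 x
  · have hksub : k - n₀ < k := Nat.sub_lt (hn₀.trans_le hk) hn₀
    have hdiv : k / n₀ = (k - n₀) / n₀ + 1 := Nat.div_eq_sub_div hn₀ hk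
    have hQk : Q ^ k = Q ^ n₀ * Q ^ (k - n₀) := by
      rw [← pow_add, Nat.add_sub_cancel' hk]
    rw [hQk, ← Matrix.vecMul_vecMul]
    set y := Matrix.vecMul x (Q ^ n₀) with hy
    have hysum : ∑ i, y i = 0 := by
      rw [hy, sum_vecMul_stoch _ (stoch_pow Q h0 h1 n₀).2, hx]
    have h2 : ∑ j, |y j| ≤ (1 - κ) * ∑ i, |x i| :=
      doeblin_contract _ (stoch_pow Q h0 h1 n₀).2 κ ν₀ hν₀1 hD x hx
    calc ∑ j, |Matrix.vecMul y (Q ^ (k - n₀)) j|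
        ≤ (1 - κ) ^ ((k - n₀) / n₀) * ∑ i, |y i| := ih _ hksub y hysum
      _ ≤ (1 - κ) ^ ((k - n₀) / n₀) * ((1 - κ) * ∑ i, |x i|) :=
          mul_le_mul_of_nonneg_left h2 (pow_nonneg (by linarith) _)
      _ = (1 - κ) ^ (k / n₀) * ∑ i, |x i| := by
          rw [hdiv, pow_succ]; ring

lemma summable_geom_div {r : ℝ} (h0r : 0 ≤ r) (hr1 : r < 1) {n₀ : ℕ} (hn₀ : 0 < n₀) :
    Summable (fun k : ℕ => r ^ (k / n₀)) := by
  have aux : ∀ Q : ℕ, ∑ k ∈ Finset.range (n₀ * Q), r ^ (k / n₀)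
      = n₀ * ∑ q ∈ Finset.range Q, r ^ q := by
    intro Q
    induction Q with
    | zero => simp
    | succ Q ihQ =>
      rw [Nat.mul_succ, Finset.sum_range_add, ihQ, Finset.sum_range_succ]
      have : ∀ i ∈ Finset.range n₀, r ^ ((n₀ * Q + i) / n₀) = r ^ Q := by
        intro i hi
        rw [Nat.mul_add_div hn₀, Nat.div_eq_of_lt (Finset.mem_range.1 hi), add_zero]
      rw [Finset.sum_congr rfl this, Finset.sum_const, Finset.card_range,
        nsmul_eq_mul, mul_add]
  refine summable_of_sum_range_le (c := n₀ * (1 - r)⁻¹) (fun n => pow_nonneg h0r _) ?_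
  intro n
  have h1 : ∑ k ∈ Finset.range n, r ^ (k / n₀) ≤ ∑ k ∈ Finset.range (n₀ * n), r ^ (k / n₀) := by
    refine Finset.sum_le_sum_of_subset_of_nonneg ?_ (fun k _ _ => pow_nonneg h0r _)
    exact Finset.range_subset_range.2 (Nat.le_mul_of_pos_left n hn₀)
  have h2 : ∑ q ∈ Finset.range n, r ^ q ≤ (1 - r)⁻¹ := by
    have := (summable_geometric_of_lt_one h0r hr1).sum_le_tsum (Finset.range n)
      (fun i _ => pow_nonneg h0r i)
    rwa [tsum_geometric_of_lt_one h0r hr1] at this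
  calc ∑ k ∈ Finset.range n, r ^ (k / n₀) ≤ n₀ * ∑ q ∈ Finset.range n, r ^ q := by
        rw [← aux n]; exact h1
    _ ≤ n₀ * (1 - r)⁻¹ := by
        exact mul_le_mul_of_nonneg_left h2 (by positivity)

/-- Differentiability of the invariant measure of a smooth Doeblin family of
stochastic matrices, with the geometrically convergent series formula for the
directional derivative. -/
theorem stmt4 {m M : ℕ} (hm : 0 < m)
    (P : (Fin M → ℝ) → Matrix (Fin m) (Fin m) ℝ)
    (hsmooth : ∀ i j, ContDiff ℝ 1 (fun θ => P θ i j))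
    (hP0 : ∀ θ i j, 0 ≤ P θ i j) (hP1 : ∀ θ i, ∑ j, P θ i j = 1)
    (n₀ : ℕ) (hn₀ : 0 < n₀) (κ : ℝ) (hκ : 0 < κ) (hκ1 : κ ≤ 1)
    (ν₀ : Fin m → ℝ) (hν₀0 : ∀ j, 0 ≤ ν₀ j) (hν₀1 : ∑ j, ν₀ j = 1)
    (hDoeblin : ∀ θ i j, κ * ν₀ j ≤ (P θ ^ n₀) i j)
    (μ : (Fin M → ℝ) → Fin m → ℝ)
    (hμ0 : ∀ θ i, 0 ≤ μ θ i) (hμ1 : ∀ θ, ∑ i, μ θ i = 1)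
    (hinv : ∀ θ, Matrix.vecMul (μ θ) (P θ) = μ θ)
    (hμunique : ∀ θ (μ' : Fin m → ℝ), (∀ i, 0 ≤ μ' i) → (∑ i, μ' i = 1) →
      Matrix.vecMul μ' (P θ) = μ' → μ' = μ θ)
    (θ : Fin M → ℝ) (l : Fin M) :
    HasLineDerivAt ℝ μ
      (fun j => ∑' k : ℕ,
        Matrix.vecMul
          (fun j' => ∑ i, μ θ i * fderiv ℝ (fun θ' => P θ' i j') θ (Pi.single l 1))
          (P θ ^ k) j)
      θ (Pi.single l 1) ∧
    ∀ k : ℕ,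
      (1 / 2) * ∑ j, |Matrix.vecMul
          (fun j' => ∑ i, μ θ i * fderiv ℝ (fun θ' => P θ' i j') θ (Pi.single l 1))
          (P θ ^ k) j|
        ≤ (1 / 2) * (⨆ i, ∑ j, |fderiv ℝ (fun θ' => P θ' i j) θ (Pi.single l 1)|)
            * (1 - κ) ^ (k / n₀) := by
  classical
  set e : Fin M → ℝ := Pi.single l 1 with he
  set d : Fin m → Fin m → ℝ := fun i j => fderiv ℝ (fun θ' => P θ' i j) θ e with hd
  set v : Fin m → ℝ := fun j' => ∑ i, μ θ i * d i j' with hv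
  -- basic constants
  have h0r : (0:ℝ) ≤ 1 - κ := by linarith
  have hr1 : (1:ℝ) - κ < 1 := by linarith
  -- the matrix J of all ones and A θ' = 1 - P θ' + J
  set J : Matrix (Fin m) (Fin m) ℝ := Matrix.of fun _ _ => (1:ℝ) with hJ
  set A : (Fin M → ℝ) → Matrix (Fin m) (Fin m) ℝ := fun θ' => 1 - P θ' + J with hA
  have hAapp : ∀ θ' (x : Fin m → ℝ) j,
      Matrix.vecMul x (A θ') j = x j - Matrix.vecMul x (P θ') j + ∑ i, x i := by
    intro θ' x j
    simp only [hA, hJ, Matrix.vecMul, dotProduct, Matrix.add_apply, Matrix.sub_apply,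
      Matrix.one_apply, Matrix.of_apply]
    have step : ∀ i : Fin m, x i * ((if i = j then (1:ℝ) else 0) - P θ' i j + 1)
        = ((if i = j then x i else 0) - x i * P θ' i j + x i) := by
      intro i; by_cases h : i = j <;> simp [h] <;> ring
    rw [Finset.sum_congr rfl fun i _ => step i]
    rw [Finset.sum_add_distrib, Finset.sum_sub_distrib, Finset.sum_ite_eq' Finset.univ j x]
    simp
  -- invertibility of A θ' for every θ'
  have hker : ∀ θ' (x : Fin m → ℝ), Matrix.vecMul x (A θ') = 0 → x = 0 := by
    intro θ' x hx0
    have happ : ∀ j, x j - Matrix.vecMul x (P θ') j + ∑ i, x i = 0 := by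
      intro j; rw [← hAapp θ' x j, hx0]; rfl
    have hsum : ∑ i, x i = 0 := by
      have h1 : ∑ j, (x j - Matrix.vecMul x (P θ') j + ∑ i, x i) = 0 := by
        simp [happ]
      rw [Finset.sum_add_distrib, Finset.sum_sub_distrib,
        sum_vecMul_stoch _ (hP1 θ'), Finset.sum_const, Finset.card_univ,
        Fintype.card_fin, sub_self, zero_add, nsmul_eq_mul] at h1
      have hm' : (m:ℝ) ≠ 0 := Nat.cast_ne_zero.2 hm.ne'
      exact (mul_eq_zero.1 h1).resolve_left hm'
    have hfix : Matrix.vecMul x (P θ') = x := by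
      funext j
      have := happ j
      rw [hsum, add_zero, sub_eq_zero] at this
      exact this.symm
    have hfixpow : ∀ k, Matrix.vecMul x (P θ' ^ k) = x := by
      intro k
      induction k with
      | zero => rw [pow_zero, Matrix.vecMul_one]
      | succ k ihk => rw [pow_succ, ← Matrix.vecMul_vecMul, ihk, hfix]
    have hcon := doeblin_contract_pow (P θ') (hP0 θ') (hP1 θ') n₀ hn₀ κ hκ1 ν₀ hν₀1
      (hDoeblin θ') x hsum n₀
    rw [hfixpow n₀, Nat.div_self hn₀, pow_one] at hcon
    have habs : ∑ i, |x i| = 0 := by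
      have h0 : 0 ≤ ∑ i, |x i| := Finset.sum_nonneg fun i _ => abs_nonneg _
      nlinarith
    funext i
    have := (Finset.sum_eq_zero_iff_of_nonneg (fun i _ => abs_nonneg (x i))).1 habs i
      (Finset.mem_univ i)
    simpa using abs_eq_zero.1 this
  have hA_unit : ∀ θ', IsUnit (A θ').det := by
    intro θ'
    rw [isUnit_iff_ne_zero, Ne, ← Matrix.exists_vecMul_eq_zero_iff]
    rintro ⟨x, hx, hxA⟩
    exact hx (hker θ' x hxA)
  -- μ θ' = u ᵥ* (A θ')⁻¹ where u is the all-ones vector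
  set u : Fin m → ℝ := fun _ => 1 with hu
  have hμA : ∀ θ', Matrix.vecMul (μ θ') (A θ') = u := by
    intro θ'
    funext j
    rw [hAapp θ' (μ θ') j, hinv θ', hμ1 θ']
    simp [hu]
  have hμeq : ∀ θ', μ θ' = Matrix.vecMul u (A θ')⁻¹ := by
    intro θ'
    have h := congrArg (fun z => Matrix.vecMul z (A θ')⁻¹) (hμA θ')
    simp only [Matrix.vecMul_vecMul, Matrix.mul_nonsing_inv _ (hA_unit θ'),
      Matrix.vecMul_one] at h
    exact h
  -- the line through θ
  set q : ℝ → (Fin M → ℝ) := fun t => θ + t • e with hq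
  have hq0 : q 0 = θ := by simp [hq]
  have hqd : HasDerivAt q e 0 := by
    have h1 : HasDerivAt (fun t : ℝ => t • e) ((1:ℝ) • e) 0 :=
      (hasDerivAt_id (0:ℝ)).smul_const e
    simpa [hq, one_smul] using h1.const_add θ
  have hEntry : ∀ i j, HasDerivAt (fun t => P (q t) i j) (d i j) 0 := by
    intro i j
    have hdiff : DifferentiableAt ℝ (fun θ' => P θ' i j) θ :=
      ((hsmooth i j).differentiable one_ne_zero) θ
    have hf : HasFDerivAt (fun θ' => P θ' i j) (fderiv ℝ (fun θ' => P θ' i j) θ) (q 0) := by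
      rw [hq0]; exact hdiff.hasFDerivAt
    have h := hf.comp_hasDerivAt 0 hqd
    simpa [hd, Function.comp_def] using h
  -- row sums of d vanish
  have hdrow : ∀ i, ∑ j, d i j = 0 := by
    intro i
    have h1 : HasDerivAt (fun t => ∑ j, P (q t) i j) (∑ j, d i j) 0 :=
      HasDerivAt.fun_sum fun j _ => hEntry i j
    have h2 : (fun t => ∑ j, P (q t) i j) = fun _ => (1:ℝ) :=
      funext fun t => hP1 (q t) i
    rw [h2] at h1
    exact h1.unique (hasDerivAt_const 0 1)
  have hv0 : ∑ j, v j = 0 := by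
    simp only [hv]
    rw [Finset.sum_comm]
    calc ∑ i, ∑ j, μ θ i * d i j = ∑ i, μ θ i * ∑ j, d i j := by simp [Finset.mul_sum]
      _ = 0 := by simp [hdrow]
  -- matrix-valued derivative of t ↦ P (q t)
  set P' : Matrix (Fin m) (Fin m) ℝ := Matrix.of d with hP'
  have hPmat : HasDerivAt (fun t => P (q t)) P' 0 := by
    have h := HasDerivAt.fun_sum (u := Finset.univ) fun (i : Fin m) _ =>
      HasDerivAt.fun_sum (u := Finset.univ) fun (j : Fin m) _ =>
        (hEntry i j).smul_const (Matrix.single i j (1:ℝ))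
    have key : ∀ X : Matrix (Fin m) (Fin m) ℝ,
        (∑ i, ∑ j, X i j • Matrix.single i j (1:ℝ)) = X := by
      intro X
      conv_rhs => rw [Matrix.matrix_eq_sum_single X]
      simp [Matrix.smul_single, smul_eq_mul]
    have hfun : (fun t => ∑ i, ∑ j, P (q t) i j • Matrix.single i j (1:ℝ))
        = fun t => P (q t) := funext fun t => key (P (q t))
    have hval : (∑ i, ∑ j, d i j • Matrix.single i j (1:ℝ)) = P' := by
      rw [← key P']
      rfl
    rw [← hfun, ← hval]
    exact h
  have hBd : HasDerivAt (fun t => A (q t)) (-P') 0 := by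
    have h := hPmat.const_sub ((1 : Matrix (Fin m) (Fin m) ℝ) + J)
    have hfun : (fun t => ((1 : Matrix (Fin m) (Fin m) ℝ) + J) - P (q t))
        = fun t => A (q t) := by
      funext t; simp only [hA]; abel
    rwa [hfun] at h
  -- derivative of the inverse
  set Z : Matrix (Fin m) (Fin m) ℝ := (A θ)⁻¹ with hZ
  obtain ⟨xu, hxu⟩ := (Matrix.isUnit_iff_isUnit_det (A θ)).2 (hA_unit θ)
  have hinvd : HasDerivAt (fun t => (A (q t))⁻¹) (Z * P' * Z) 0 := by
    have hf : HasFDerivAt Ring.inverse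
        (-ContinuousLinearMap.mulLeftRight ℝ _ ↑xu⁻¹ ↑xu⁻¹) (A (q 0)) := by
      rw [hq0, ← hxu]; exact hasFDerivAt_ringInverse xu
    have h := hf.comp_hasDerivAt 0 hBd
    simp only [Function.comp_def] at h
    have hxuinv : (↑xu⁻¹ : Matrix (Fin m) (Fin m) ℝ) = Z := by
      rw [Matrix.coe_units_inv, hxu]
    have hfun : (fun t => Ring.inverse (A (q t))) = fun t => (A (q t))⁻¹ :=
      funext fun t => (Matrix.nonsing_inv_eq_ringInverse _).symm
    rw [hfun] at h
    refine h.congr_deriv ?_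
    rw [hxuinv]
    simp [ContinuousLinearMap.mulLeftRight_apply, mul_assoc]
  -- the limit vector w
  set w : Fin m → ℝ := Matrix.vecMul v Z with hw
  have hwA : Matrix.vecMul w (A θ) = v := by
    rw [hw, Matrix.vecMul_vecMul, Matrix.nonsing_inv_mul _ (hA_unit θ), Matrix.vecMul_one]
  have hw0 : ∑ i, w i = 0 := by
    have h1 : ∑ j, Matrix.vecMul w (A θ) j = ∑ j, v j := by rw [hwA]
    have h2 : ∑ j, (w j - Matrix.vecMul w (P θ) j + ∑ i, w i) = ∑ j, v j := by
      rw [← h1]; exact Finset.sum_congr rfl fun j _ => (hAapp θ w j).symm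
    rw [hv0, Finset.sum_add_distrib, Finset.sum_sub_distrib,
      sum_vecMul_stoch _ (hP1 θ), Finset.sum_const, Finset.card_univ,
      Fintype.card_fin, sub_self, zero_add, nsmul_eq_mul] at h2
    have hm' : (m:ℝ) ≠ 0 := Nat.cast_ne_zero.2 hm.ne'
    exact (mul_eq_zero.1 h2).resolve_left hm'
  have hrec : w = fun j => v j + Matrix.vecMul w (P θ) j := by
    funext j
    have := congrFun hwA j
    rw [hAapp θ w j, hw0, add_zero] at this
    linarith [this]
  have hpartial : ∀ (K : ℕ) j, ∑ k ∈ Finset.range K, Matrix.vecMul v (P θ ^ k) j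
      = w j - Matrix.vecMul w (P θ ^ K) j := by
    intro K
    induction K with
    | zero => intro j; simp [Matrix.vecMul_one]
    | succ K ihK =>
      intro j
      rw [Finset.sum_range_succ, ihK j]
      have hsplit : Matrix.vecMul w (P θ ^ K)
          = fun j => Matrix.vecMul v (P θ ^ K) j + Matrix.vecMul w (P θ ^ (K + 1)) j := by
        conv_lhs => rw [hrec]
        funext j'
        have : Matrix.vecMul (fun j => v j + Matrix.vecMul w (P θ) j) (P θ ^ K)
            = Matrix.vecMul v (P θ ^ K) + Matrix.vecMul (Matrix.vecMul w (P θ)) (P θ ^ K) :=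
          Matrix.add_vecMul _ _ _
        rw [this]
        simp only [Pi.add_apply]
        rw [Matrix.vecMul_vecMul, ← pow_succ']
      rw [congrFun hsplit j]
      ring
  have hcontract := doeblin_contract_pow (P θ) (hP0 θ) (hP1 θ) n₀ hn₀ κ hκ1 ν₀ hν₀1
    (hDoeblin θ)
  -- convergence of the series to w
  have hdivtend : Filter.Tendsto (fun K : ℕ => K / n₀) Filter.atTop Filter.atTop := by
    refine Filter.tendsto_atTop_atTop.2 fun b => ⟨b * n₀, fun a ha => ?_⟩
    exact (Nat.le_div_iff_mul_le hn₀).2 ha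
  have hpowtend : Filter.Tendsto (fun K : ℕ => (1 - κ) ^ (K / n₀)) Filter.atTop (nhds 0) :=
    (tendsto_pow_atTop_nhds_zero_of_lt_one h0r hr1).comp hdivtend
  have habs_single : ∀ (x : Fin m → ℝ) (hx : ∑ i, x i = 0) (k : ℕ) j,
      |Matrix.vecMul x (P θ ^ k) j| ≤ (1 - κ) ^ (k / n₀) * ∑ i, |x i| := by
    intro x hx k j
    refine le_trans ?_ (hcontract x hx k)
    exact Finset.single_le_sum (f := fun j => |Matrix.vecMul x (P θ ^ k) j|)
      (fun j _ => abs_nonneg _) (Finset.mem_univ j)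
  have hhs : ∀ j, HasSum (fun k => Matrix.vecMul v (P θ ^ k) j) (w j) := by
    intro j
    have hsummable : Summable fun k => ‖Matrix.vecMul v (P θ ^ k) j‖ := by
      refine Summable.of_nonneg_of_le (fun k => norm_nonneg _)
        (fun k => ?_) (((summable_geom_div h0r hr1 hn₀).mul_right (∑ i, |v i|)))
      simpa [Real.norm_eq_abs] using habs_single v hv0 k j
    refine (hasSum_iff_tendsto_nat_of_summable_norm hsummable).2 ?_
    have hts : Filter.Tendsto (fun K => w j - Matrix.vecMul w (P θ ^ K) j)
        Filter.atTop (nhds (w j)) := by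
      have h0 : Filter.Tendsto (fun K => Matrix.vecMul w (P θ ^ K) j)
          Filter.atTop (nhds 0) := by
        refine squeeze_zero_norm (fun K => ?_)
          (by simpa using hpowtend.mul_const (∑ i, |w i|))
        simpa [Real.norm_eq_abs] using habs_single w hw0 K j
      simpa using (tendsto_const_nhds (x := w j)).sub h0
    refine hts.congr ?_
    intro K
    exact (hpartial K j).symm
  -- the coordinatewise derivative
  have hcoord : ∀ j, HasDerivAt (fun t => μ (q t) j) (w j) 0 := by
    intro j
    let Lj : Matrix (Fin m) (Fin m) ℝ →L[ℝ] ℝ :=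
      LinearMap.toContinuousLinearMap
        { toFun := fun X : Matrix (Fin m) (Fin m) ℝ => ∑ k, X k j
          map_add' := fun X Y => by simp [Matrix.add_apply, Finset.sum_add_distrib]
          map_smul' := fun c X => by simp [Matrix.smul_apply, smul_eq_mul, Finset.mul_sum] }
    have h := Lj.hasFDerivAt.comp_hasDerivAt 0 hinvd
    simp only [Function.comp_def] at h
    have hLapp : ∀ X : Matrix (Fin m) (Fin m) ℝ, Lj X = ∑ k, X k j := fun X => rfl
    have hfun : (fun t => Lj ((A (q t))⁻¹)) = fun t => μ (q t) j := by
      funext t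
      rw [hLapp, hμeq (q t)]
      simp [Matrix.vecMul, dotProduct, hu]
    have hval : Lj (Z * P' * Z) = w j := by
      rw [hLapp]
      have h1 : ∑ k, (Z * P' * Z) k j = Matrix.vecMul u (Z * P' * Z) j := by
        simp [Matrix.vecMul, dotProduct, hu]
      rw [h1, ← Matrix.vecMul_vecMul, ← Matrix.vecMul_vecMul, ← hμeq θ]
      have h2 : Matrix.vecMul (μ θ) P' = v := by
        funext j'
        simp [Matrix.vecMul, dotProduct, hP', hv]
      rw [h2, ← hw]
    rw [hfun] at h
    exact h.congr_deriv hval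
  constructor
  · show HasDerivAt (fun t => μ (θ + t • e)) _ 0
    refine hasDerivAt_pi.2 fun j => ?_
    have : (∑' k : ℕ, Matrix.vecMul v (P θ ^ k) j) = w j := (hhs j).tsum_eq
    simpa [this] using hcoord j
  · intro k
    have h1 : ∑ j, |Matrix.vecMul v (P θ ^ k) j| ≤ (1 - κ) ^ (k / n₀) * ∑ i, |v i| :=
      hcontract v hv0 k
    set S : ℝ := ⨆ i, ∑ j, |d i j| with hS
    have hSb : ∀ i, ∑ j, |d i j| ≤ S := by
      intro i
      rw [hS]
      exact le_ciSup (f := fun i => ∑ j, |d i j|)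
        (Set.Finite.bddAbove (Set.finite_range _)) i
    have h2 : ∑ i, |v i| ≤ S := by
      calc ∑ j, |v j| ≤ ∑ j, ∑ i, μ θ i * |d i j| := by
            refine Finset.sum_le_sum fun j _ => ?_
            simp only [hv]
            refine (Finset.abs_sum_le_sum_abs _ _).trans (Finset.sum_le_sum fun i _ => ?_)
            rw [abs_mul, abs_of_nonneg (hμ0 θ i)]
        _ = ∑ i, μ θ i * ∑ j, |d i j| := by
            rw [Finset.sum_comm]; simp [Finset.mul_sum]
        _ ≤ ∑ i, μ θ i * S := by
            refine Finset.sum_le_sum fun i _ => ?_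
            exact mul_le_mul_of_nonneg_left (hSb i) (hμ0 θ i)
        _ = S := by rw [← Finset.sum_mul, hμ1 θ, one_mul]
    have h3 : ∑ j, |Matrix.vecMul v (P θ ^ k) j| ≤ S * (1 - κ) ^ (k / n₀) := by
      calc ∑ j, |Matrix.vecMul v (P θ ^ k) j| ≤ (1 - κ) ^ (k / n₀) * ∑ i, |v i| := h1
        _ ≤ (1 - κ) ^ (k / n₀) * S := mul_le_mul_of_nonneg_left h2 (pow_nonneg h0r _)
        _ = S * (1 - κ) ^ (k / n₀) := mul_comm _ _
    calc (1 / 2 : ℝ) * ∑ j, |Matrix.vecMul v (P θ ^ k) j|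
        ≤ (1 / 2 : ℝ) * (S * (1 - κ) ^ (k / n₀)) := by linarith
      _ = (1 / 2 : ℝ) * S * (1 - κ) ^ (k / n₀) := by ring
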